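/- Let N ≥ 1 and let R : ℝ³ → ℝ^N be a continuously differentiable function of (t,x,y) whose components satisfy the pair of linearly degenerate systems (ld): R^i_t = (Π_{k≠i} R^k) R^i_x and R^i_y = (Σ_{k≠i} R^k − Π_{k≠i} R^k) R^i_x for each i = 1, …, N. Then the functions v := −Σ_k R^k and w := Π_k R^k solve the system (max): v_t + w_x = 0 and w_t + w_y + v w_x − w v_x = 0. -/

import Mathlib

/-- Partial derivative of `f : ℝⁿ → ℝ` in the `i`-th coordinate direction. -/
noncomputable def pd {n : ℕ} (i : Fin n) (f : (Fin n → ℝ) → ℝ) (x : Fin n → ℝ) : ℝ :=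
  fderiv ℝ f x (Pi.single i 1)

/-- Coordinates on ℝ³ are `(t,x,y)` = indices `(0,1,2)`.
If the phases `Rⁱ` satisfy the pair of linearly degenerate systems (ld):
`Rⁱ_t = (Π_{k≠i} R^k) Rⁱ_x`, `Rⁱ_y = (Σ_{k≠i} R^k − Π_{k≠i} R^k) Rⁱ_x`, then
`v = −Σ_k R^k` and `w = Π_k R^k` solve the system (max). -/
theorem stmt13 (N : ℕ) (hN : 1 ≤ N)
    (R : (Fin 3 → ℝ) → (Fin N → ℝ)) (hR : ContDiff ℝ 1 R)
    (hRt : ∀ (i : Fin N) (p : Fin 3 → ℝ),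
        pd 0 (fun q => R q i) p =
          (∏ k ∈ Finset.univ.erase i, R p k) * pd 1 (fun q => R q i) p)
    (hRy : ∀ (i : Fin N) (p : Fin 3 → ℝ),
        pd 2 (fun q => R q i) p =
          ((∑ k ∈ Finset.univ.erase i, R p k) - ∏ k ∈ Finset.univ.erase i, R p k) *
            pd 1 (fun q => R q i) p) :
    (∀ p, pd 0 (fun q => -∑ k, R q k) p + pd 1 (fun q => ∏ k, R q k) p = 0) ∧
    (∀ p, pd 0 (fun q => ∏ k, R q k) p + pd 2 (fun q => ∏ k, R q k) p
        + (-∑ k, R p k) * pd 1 (fun q => ∏ k, R q k) p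
        - (∏ k, R p k) * pd 1 (fun q => -∑ k, R q k) p = 0) := by
  have hdiff : ∀ (i : Fin N) (p : Fin 3 → ℝ), DifferentiableAt ℝ (fun q => R q i) p := by
    intro i p
    exact (differentiable_pi.mp (hR.differentiable one_ne_zero) i) p
  have keysum : ∀ (j : Fin 3) (p : Fin 3 → ℝ),
      pd j (fun q => ∑ k, R q k) p = ∑ k, pd j (fun q => R q k) p := by
    intro j p
    simp only [pd]
    rw [fderiv_fun_sum (fun i _ => hdiff i p)]
    simp
  have keyneg : ∀ (j : Fin 3) (p : Fin 3 → ℝ),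
      pd j (fun q => -∑ k, R q k) p = -∑ k, pd j (fun q => R q k) p := by
    intro j p
    have : pd j (fun q => -∑ k, R q k) p = -pd j (fun q => ∑ k, R q k) p := by
      simp only [pd]
      rw [fderiv_fun_neg]
      simp
    rw [this, keysum]
  have keyprod : ∀ (j : Fin 3) (p : Fin 3 → ℝ),
      pd j (fun q => ∏ k, R q k) p
        = ∑ i, (∏ k ∈ Finset.univ.erase i, R p k) * pd j (fun q => R q i) p := by
    intro j p
    simp only [pd]
    rw [fderiv_finset_prod (fun i _ => hdiff i p)]
    simp [smul_eq_mul]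
  constructor
  · intro p
    rw [keyneg, keyprod]
    simp only [hRt]
    exact neg_add_cancel _
  · intro p
    rw [keyprod 0, keyprod 2, keyprod 1, keyneg 1]
    simp only [hRt, hRy, neg_mul, mul_neg, neg_neg, sub_neg_eq_add, Finset.mul_sum,
      ← Finset.sum_neg_distrib, ← Finset.sum_add_distrib]
    rw [sub_eq_add_neg, ← Finset.sum_neg_distrib, ← Finset.sum_add_distrib]
    apply Finset.sum_eq_zero
    intro i _
    rw [Finset.sum_neg_distrib,← Finset.sum_erase_add Finset.univ (R p) (Finset.mem_univ i),
      ← Finset.mul_prod_erase Finset.univ (R p) (Finset.mem_univ i)]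
    ring
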